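/- Let c > 0 and let f : [0, ∞) → ℝ be continuous with f(0) ∈ [−c, c]. Then there exists a unique pair (η⁺, η⁻) of continuous nondecreasing functions from [0, ∞) to ℝ with η⁺(0) = η⁻(0) = 0 such that the function y(t) = f(t) − η⁺(t) + η⁻(t) satisfies y(t) ∈ [−c, c] for all t ≥ 0, η⁺ is constant on every interval on which y < c, and η⁻ is constant on every interval on which y > −c. -/

import Mathlib

open Set

noncomputable def runSup (φ : ℝ → ℝ) (t : ℝ) : ℝ := sSup (insert 0 (φ '' Set.Icc 0 t))

lemma runSup_of_neg {φ : ℝ → ℝ} {t : ℝ} (ht : t < 0) : runSup φ t = 0 := by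
  unfold runSup
  rw [Set.Icc_eq_empty (by linarith), Set.image_empty]
  simp

lemma bddAbove_ins {φ : ℝ → ℝ} {t C : ℝ} (h : ∀ s ∈ Set.Icc 0 t, φ s ≤ C) :
    BddAbove (insert 0 (φ '' Set.Icc 0 t)) := by
  refine ⟨max 0 C, ?_⟩
  rintro x (rfl | ⟨s, hs, rfl⟩)
  · exact le_max_left _ _
  · exact (h s hs).trans (le_max_right _ _)

lemma bddAbove_ins_of_cont {φ : ℝ → ℝ} {t : ℝ} (hφ : Continuous φ) :
    BddAbove (insert 0 (φ '' Set.Icc 0 t)) :=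
  ((isCompact_Icc.image hφ).bddAbove).insert 0

lemma runSup_le {φ : ℝ → ℝ} {t M : ℝ} (h0 : 0 ≤ M) (h : ∀ s ∈ Set.Icc 0 t, φ s ≤ M) :
    runSup φ t ≤ M := by
  refine csSup_le (insert_nonempty _ _) ?_
  rintro x (rfl | ⟨s, hs, rfl⟩)
  · exact h0
  · exact h s hs

lemma le_runSup {φ : ℝ → ℝ} {t s : ℝ} (hb : BddAbove (insert 0 (φ '' Set.Icc 0 t)))
    (hs : s ∈ Set.Icc 0 t) : φ s ≤ runSup φ t :=
  le_csSup hb (Set.mem_insert_of_mem _ ⟨s, hs, rfl⟩)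

lemma runSup_nonneg {φ : ℝ → ℝ} {t : ℝ} (hb : BddAbove (insert 0 (φ '' Set.Icc 0 t))) :
    0 ≤ runSup φ t := le_csSup hb (Set.mem_insert _ _)

lemma runSup_mono_t {φ : ℝ → ℝ} {t₁ t₂ : ℝ} (hb : BddAbove (insert 0 (φ '' Set.Icc 0 t₂)))
    (h : t₁ ≤ t₂) : runSup φ t₁ ≤ runSup φ t₂ :=
  csSup_le_csSup hb (insert_nonempty _ _)
    (Set.insert_subset_insert (Set.image_mono (Set.Icc_subset_Icc le_rfl h)))

lemma runSup_mono_fun {φ ψ : ℝ → ℝ} {t : ℝ} (h : ∀ s ∈ Set.Icc 0 t, φ s ≤ ψ s)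
    (hb : BddAbove (insert 0 (ψ '' Set.Icc 0 t))) : runSup φ t ≤ runSup ψ t :=
  runSup_le (runSup_nonneg hb) (fun s hs => (h s hs).trans (le_runSup hb hs))

lemma runSup_split {φ : ℝ → ℝ} {a b : ℝ} (h0 : 0 ≤ a) (hab : a ≤ b)
    (hb : BddAbove (insert 0 (φ '' Set.Icc 0 b))) :
    runSup φ b = max (runSup φ a) (sSup (φ '' Set.Icc a b)) := by
  have hsplit : Set.Icc 0 b = Set.Icc 0 a ∪ Set.Icc a b :=
    (Set.Icc_union_Icc_eq_Icc h0 hab).symm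
  have h1 : insert 0 (φ '' Set.Icc 0 b) = (insert 0 (φ '' Set.Icc 0 a)) ∪ (φ '' Set.Icc a b) := by
    rw [hsplit, Set.image_union, Set.insert_union]
  have hb1 : BddAbove (insert 0 (φ '' Set.Icc 0 a)) :=
    hb.mono (by rw [h1]; exact Set.subset_union_left)
  have hb2 : BddAbove (φ '' Set.Icc a b) :=
    hb.mono (by rw [h1]; exact Set.subset_union_right)
  unfold runSup
  rw [h1, csSup_union hb1 (insert_nonempty _ _) hb2
    ((Set.nonempty_Icc.2 hab).image _)]

lemma runSup_zero {φ : ℝ → ℝ} (h : φ 0 ≤ 0) : runSup φ 0 = 0 := by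
  unfold runSup
  rw [Set.Icc_self, Set.image_singleton]
  rw [show insert (0:ℝ) {φ 0} = ({0, φ 0} : Set ℝ) from rfl, csSup_pair]
  exact max_eq_left h

lemma runSup_attained {φ : ℝ → ℝ} {t : ℝ} (hφ : Continuous φ) (ht : 0 ≤ t)
    (hpos : 0 < runSup φ t) : ∃ s ∈ Set.Icc 0 t, φ s = runSup φ t := by
  obtain ⟨s, hs, hmax⟩ := isCompact_Icc.exists_isMaxOn (Set.nonempty_Icc.2 ht) hφ.continuousOn
  refine ⟨s, hs, ?_⟩
  have h1 : runSup φ t ≤ max 0 (φ s) := runSup_le (le_max_left _ _)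
    (fun u hu => (hmax hu).trans (le_max_right _ _))
  have h2 : φ s ≤ runSup φ t := le_runSup (bddAbove_ins_of_cont hφ) hs
  rcases max_cases 0 (φ s) with ⟨he, hle⟩ | ⟨he, _⟩ <;> rw [he] at h1 <;> linarith

/-- helper: drop ε in `a ≤ max A (B + ε)` -/
lemma le_max_of_forall_eps {a A B : ℝ} (h : ∀ ε > 0, a ≤ max A (B + ε)) : a ≤ max A B := by
  by_contra hlt
  push_neg at hlt
  have hA : A < a := lt_of_le_of_lt (le_max_left A B) hlt
  have hB : B < a := lt_of_le_of_lt (le_max_right A B) hlt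
  have hmax : max A B < a := max_lt hA hB
  have hε : (0:ℝ) < (a - max A B) / 2 := by linarith
  have h1 := h _ hε
  have h2 : max A (B + (a - max A B) / 2) < a := by
    apply max_lt hA
    have : B ≤ max A B := le_max_right _ _
    linarith
  linarith

lemma continuous_of_mono_squeeze {g : ℝ → ℝ} (hm : Monotone g)
    (key : ∀ t : ℝ, ∀ ε > (0:ℝ), ∃ δ > (0:ℝ), g (t + δ) ≤ g (t - δ) + ε) :
    Continuous g := by
  rw [continuous_iff_continuousAt]
  intro t
  rw [Metric.continuousAt_iff]
  intro ε hε
  obtain ⟨δ, hδ, hle⟩ := key t (ε/2) (by linarith)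
  refine ⟨δ, hδ, fun x hx => ?_⟩
  rw [Real.dist_eq] at hx ⊢
  have hx' := abs_lt.1 hx
  have h1 : g (t - δ) ≤ g x := hm (by linarith)
  have h2 : g x ≤ g (t + δ) := hm (by linarith)
  have h3 : g (t - δ) ≤ g t := hm (by linarith)
  have h4 : g t ≤ g (t + δ) := hm (by linarith)
  rw [abs_lt]
  constructor <;> linarith

lemma runSup_continuous {φ : ℝ → ℝ} (hφ : Continuous φ) (h0 : φ 0 ≤ 0) :
    Continuous (runSup φ) := by
  have hmono : Monotone (runSup φ) := fun a b hab =>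
    runSup_mono_t (bddAbove_ins_of_cont hφ) hab
  apply continuous_of_mono_squeeze hmono
  intro t ε hε
  rcases lt_or_ge t 0 with ht | ht
  · refine ⟨-t/2, by linarith, ?_⟩
    rw [runSup_of_neg (by linarith), runSup_of_neg (by linarith)]
    linarith
  · obtain ⟨δ₀, hδ₀, hδ⟩ := Metric.continuousAt_iff.1 (hφ.continuousAt (x := t)) (ε/2) (by linarith)
    rcases eq_or_lt_of_le ht with rfl | htpos
    · refine ⟨δ₀/2, by linarith, ?_⟩
      have e1 : runSup φ ((0:ℝ) - δ₀/2) = 0 := runSup_of_neg (by linarith)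
      rw [zero_add, e1]
      have h1 : runSup φ (δ₀/2) ≤ ε/2 := by
        apply runSup_le (by linarith)
        intro s hs
        have hds : dist s 0 < δ₀ := by
          rw [Real.dist_eq, sub_zero, abs_of_nonneg hs.1]; linarith [hs.2]
        have h2 : dist (φ s) (φ 0) < ε/2 := hδ hds
        rw [Real.dist_eq] at h2
        have h2' := abs_lt.1 h2
        linarith
      linarith
    · refine ⟨min (δ₀/2) (t/2), lt_min (by linarith) (by linarith), ?_⟩
      set δ := min (δ₀/2) (t/2) with hδdef
      have hδ1 : δ ≤ δ₀/2 := min_le_left _ _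
      have hδ2 : δ ≤ t/2 := min_le_right _ _
      have hδpos : 0 < δ := lt_min (by linarith) (by linarith)
      have hta : 0 ≤ t - δ := by linarith
      rw [runSup_split (φ := φ) hta (by linarith : t - δ ≤ t + δ) (bddAbove_ins_of_cont hφ)]
      have hbound : sSup (φ '' Set.Icc (t - δ) (t + δ)) ≤ runSup φ (t - δ) + ε := by
        apply csSup_le ((Set.nonempty_Icc.2 (by linarith)).image _)
        rintro x ⟨u, hu, rfl⟩
        have h332 : φ (t - δ) ≤ runSup φ (t - δ) :=
          le_runSup (bddAbove_ins_of_cont hφ) (Set.mem_Icc.2 ⟨hta, le_rfl⟩)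
        have hdu : dist u t < δ₀ := by
          rw [Real.dist_eq, abs_lt]
          constructor <;> [linarith [hu.1]; linarith [hu.2]]
        have hdtd : dist (t - δ) t < δ₀ := by
          rw [Real.dist_eq, abs_lt]; constructor <;> linarith
        have h2 : dist (φ u) (φ t) < ε/2 := hδ hdu
        have h3 : dist (φ (t - δ)) (φ t) < ε/2 := hδ hdtd
        rw [Real.dist_eq] at h2 h3
        have h2' := abs_lt.1 h2
        have h3' := abs_lt.1 h3
        linarith
      have : runSup φ (t - δ) ≤ runSup φ (t - δ) + ε := by linarith
      exact max_le this hbound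
noncomputable def op (c : ℝ) (F g : ℝ → ℝ) : ℝ → ℝ := runSup (fun s => F s + g s - c)

lemma op_def (c : ℝ) (F g : ℝ → ℝ) (t : ℝ) : op c F g t = runSup (fun s => F s + g s - c) t := rfl

lemma op_bdd_of_cont {c : ℝ} {F g : ℝ → ℝ} (hF : Continuous F) (hg : Continuous g) (t : ℝ) :
    BddAbove (insert 0 ((fun s => F s + g s - c) '' Set.Icc 0 t)) :=
  bddAbove_ins_of_cont (by continuity)

lemma op_bdd_of_mono {c : ℝ} {F g : ℝ → ℝ} (hF : Continuous F) (hg : Monotone g) (t : ℝ) :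
    BddAbove (insert 0 ((fun s => F s + g s - c) '' Set.Icc 0 t)) := by
  obtain ⟨CF, hCF⟩ := isCompact_Icc.exists_bound_of_continuousOn (s := Set.Icc 0 t) hF.continuousOn
  refine bddAbove_ins (C := CF + g t - c) (fun s hs => ?_)
  have h1 : F s ≤ CF := le_trans (le_abs_self _) (by have := hCF s hs; rwa [Real.norm_eq_abs] at this)
  have h2 : g s ≤ g t := hg hs.2
  linarith

lemma op_mono_of_cont {c : ℝ} {F g : ℝ → ℝ} (hF : Continuous F) (hg : Continuous g) :
    Monotone (op c F g) := fun _ b hab => runSup_mono_t (op_bdd_of_cont hF hg b) hab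

lemma op_mono_of_mono {c : ℝ} {F g : ℝ → ℝ} (hF : Continuous F) (hg : Monotone g) :
    Monotone (op c F g) := fun _ b hab => runSup_mono_t (op_bdd_of_mono hF hg b) hab

noncomputable def skSeq (c : ℝ) (F : ℝ → ℝ) : ℕ → ℝ → ℝ :=
  fun n => (fun g => op c (fun s => -F s) (op c F g))^[n] (fun _ => 0)

lemma seq_zero (c : ℝ) (F : ℝ → ℝ) : skSeq c F 0 = fun _ => 0 := rfl

lemma seq_succ (c : ℝ) (F : ℝ → ℝ) (n : ℕ) :
    skSeq c F (n + 1) = op c (fun s => -F s) (op c F (skSeq c F n)) := by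
  unfold skSeq
  rw [Function.iterate_succ_apply']

section Main

variable {c : ℝ} {F : ℝ → ℝ}

lemma seq_cont_zero (hc : 0 < c) (hF : Continuous F) (hF0 : F 0 ∈ Set.Icc (-c) c) :
    ∀ n, Continuous (skSeq c F n) ∧ (∀ t ≤ 0, skSeq c F n t = 0) := by
  intro n
  induction n with
  | zero => exact ⟨continuous_const, fun _ _ => rfl⟩
  | succ n ih =>
    obtain ⟨hcont, hzero⟩ := ih
    have hφcont : Continuous (fun s => F s + skSeq c F n s - c) := by continuity
    have hφ0 : F 0 + skSeq c F n 0 - c ≤ 0 := by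
      rw [hzero 0 le_rfl]; have := hF0.2; linarith
    have hAcont : Continuous (op c F (skSeq c F n)) := runSup_continuous hφcont hφ0
    have hAzero : ∀ t ≤ 0, op c F (skSeq c F n) t = 0 := by
      intro t ht
      rcases lt_or_eq_of_le ht with h | h
      · exact runSup_of_neg h
      · subst h; exact runSup_zero hφ0
    have hψcont : Continuous (fun s => -F s + op c F (skSeq c F n) s - c) := by continuity
    have hψ0 : -F 0 + op c F (skSeq c F n) 0 - c ≤ 0 := by
      rw [hAzero 0 le_rfl]; have := hF0.1; linarith
    rw [seq_succ]
    exact ⟨runSup_continuous hψcont hψ0, fun t ht => by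
      rcases lt_or_eq_of_le ht with h | h
      · exact runSup_of_neg h
      · subst h; exact runSup_zero hψ0⟩

lemma seq_mono (hc : 0 < c) (hF : Continuous F) (hF0 : F 0 ∈ Set.Icc (-c) c) (n : ℕ) :
    Monotone (skSeq c F n) := by
  cases n with
  | zero => exact monotone_const
  | succ n =>
    rw [seq_succ]
    have hA : Monotone (op c F (skSeq c F n)) :=
      op_mono_of_cont hF (seq_cont_zero hc hF hF0 n).1
    exact op_mono_of_mono hF.neg hA

lemma seq_le_succ (hc : 0 < c) (hF : Continuous F) (hF0 : F 0 ∈ Set.Icc (-c) c) :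
    ∀ n t, skSeq c F n t ≤ skSeq c F (n + 1) t := by
  intro n
  induction n with
  | zero =>
    intro t
    rw [seq_succ]
    have hA : Monotone (op c F (skSeq c F 0)) :=
      op_mono_of_cont hF (seq_cont_zero hc hF hF0 0).1
    exact runSup_nonneg (op_bdd_of_mono hF.neg hA t)
  | succ n ih =>
    intro t
    rw [seq_succ, seq_succ]
    have hcn1 := (seq_cont_zero hc hF hF0 (n+1)).1
    have hφ1 : Continuous (fun s => F s + skSeq c F (n+1) s - c) := by continuity
    have hinner : ∀ u, op c F (skSeq c F n) u ≤ op c F (skSeq c F (n+1)) u := by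
      intro u
      exact runSup_mono_fun (fun s _ => by have := ih s; linarith)
        (bddAbove_ins_of_cont hφ1)
    have hA1 : Continuous (op c F (skSeq c F (n+1))) := runSup_continuous hφ1 (by
      have := (seq_cont_zero hc hF hF0 (n+1)).2 0 le_rfl
      rw [this]; have := hF0.2; linarith)
    have hψ1 : Continuous (fun s => -F s + op c F (skSeq c F (n+1)) s - c) := by continuity
    exact runSup_mono_fun (fun s _ => by have := hinner s; linarith)
      (bddAbove_ins_of_cont hψ1)

end Main
section Main2

variable {c : ℝ} {F : ℝ → ℝ}

lemma seq_bdd (hc : 0 < c) (hF : Continuous F) (hF0 : F 0 ∈ Set.Icc (-c) c) (t : ℝ) :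
    ∃ G : ℝ, ∀ n, skSeq c F n t ≤ G := by
  rcases le_or_gt t 0 with ht | ht
  · exact ⟨0, fun n => le_of_eq ((seq_cont_zero hc hF hF0 n).2 t ht)⟩
  obtain ⟨M, hM⟩ := isCompact_Icc.exists_bound_of_continuousOn (s := Set.Icc 0 t) hF.continuousOn
  have hM' : ∀ s ∈ Set.Icc (0:ℝ) t, F s ≤ M ∧ -F s ≤ M := by
    intro s hs
    have := hM s hs
    rw [Real.norm_eq_abs] at this
    exact ⟨le_trans (le_abs_self _) this, le_trans (neg_le_abs _) this⟩
  have hucont := isCompact_Icc.uniformContinuousOn_of_continuous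
    (s := Set.Icc (0:ℝ) t) hF.continuousOn
  rw [Metric.uniformContinuousOn_iff_le] at hucont
  obtain ⟨δ, hδpos, hδ⟩ := hucont (2 * c) (by linarith)
  have claim : ∀ k : ℕ, ∃ G : ℝ, 0 ≤ G ∧ ∀ n, skSeq c F n (min (k * δ) t) ≤ G := by
    intro k
    induction k with
    | zero =>
      refine ⟨0, le_rfl, fun n => ?_⟩
      have h0 : min ((0:ℕ) * δ) t = 0 := by
        rw [Nat.cast_zero, zero_mul]; exact min_eq_left ht.le
      rw [h0]
      exact le_of_eq ((seq_cont_zero hc hF hF0 n).2 0 le_rfl)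
    | succ k ih =>
      obtain ⟨G, hG0, hG⟩ := ih
      by_cases hk : t ≤ k * δ
      · refine ⟨G, hG0, fun n => ?_⟩
        have h1 : min ((k:ℝ) * δ) t = t := min_eq_right hk
        have h2 : min (((k:ℕ)+1 : ℕ) * δ) t = t := by
          apply min_eq_right
          push_cast
          nlinarith
        rw [h2]
        have := hG n
        rwa [h1] at this
      push_neg at hk
      set a := (k:ℝ) * δ with ha_def
      have ha0 : 0 ≤ a := by positivity
      have hmina : min a t = a := min_eq_left hk.le
      rw [hmina] at hG
      set b := min (((k:ℕ)+1 : ℕ) * δ) t with hb_def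
      have hab : a ≤ b := by
        apply le_min _ hk.le
        push_cast
        nlinarith
      have hba : b - a ≤ δ := by
        have : b ≤ ((k:ℕ)+1 : ℕ) * δ := min_le_left _ _
        push_cast at this
        nlinarith
      have hbt : b ≤ t := min_le_right _ _
      set H := max 0 (M + G - c) with hH_def
      have hAbound : ∀ n, op c F (skSeq c F n) a ≤ H := by
        intro n
        apply runSup_le (le_max_left _ _)
        intro s hs
        have hst : s ∈ Set.Icc (0:ℝ) t := ⟨hs.1, le_trans hs.2 (le_trans hab hbt)⟩
        have h1 := (hM' s hst).1
        have h2 : skSeq c F n s ≤ G := le_trans (seq_mono hc hF hF0 n hs.2) (hG n)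
        have : M + G - c ≤ H := le_max_right _ _
        linarith
      refine ⟨max G (max 0 (H + M - c)), le_trans (le_max_left _ _) (le_max_right _ _), ?_⟩
      set KK := max G (max 0 (H + M - c)) with hKK_def
      intro n
      induction n with
      | zero => exact le_trans (le_max_left _ _) (le_max_right _ _)
      | succ n ihn =>
        rw [seq_succ]
        have hseqcont := (seq_cont_zero hc hF hF0 n).1
        have hφcont : Continuous (fun s => F s + skSeq c F n s - c) := by continuity
        have hAmono : Monotone (op c F (skSeq c F n)) := op_mono_of_cont hF hseqcont
        rw [op_def, runSup_split ha0 hab (op_bdd_of_mono (F := fun s => -F s) hF.neg hAmono b)]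
        apply max_le
        · exact le_trans (by rw [← op_def, ← seq_succ]; exact hG (n+1)) (le_max_left _ _)
        · apply csSup_le ((Set.nonempty_Icc.2 hab).image _)
          rintro x ⟨s, hs, rfl⟩
          show -F s + op c F (skSeq c F n) s - c ≤ KK
          have hs0 : 0 ≤ s := le_trans ha0 hs.1
          have hst : s ∈ Set.Icc (0:ℝ) t := ⟨hs0, le_trans hs.2 hbt⟩
          have hAs : op c F (skSeq c F n) s ≤ max H (F s + c + skSeq c F n b) := by
            rw [op_def, runSup_split ha0 hs.1 (op_bdd_of_cont hF hseqcont s)]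
            apply max_le (le_trans (hAbound n) (le_max_left _ _))
            apply csSup_le ((Set.nonempty_Icc.2 hs.1).image _)
            rintro y ⟨u, hu, rfl⟩
            have hu0 : 0 ≤ u := le_trans ha0 hu.1
            have hut : u ∈ Set.Icc (0:ℝ) t := ⟨hu0, le_trans hu.2 (le_trans hs.2 hbt)⟩
            have hdist : dist u s ≤ δ := by
              rw [Real.dist_eq, abs_le]
              constructor
              · linarith [hu.1, hs.2, hba]
              · linarith [hu.2, hδpos.le]
            have hFF : dist (F u) (F s) ≤ 2 * c := hδ u hut s hst hdist
            rw [Real.dist_eq] at hFF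
            have hFF' := abs_le.1 hFF
            have hmono : skSeq c F n u ≤ skSeq c F n b :=
              seq_mono hc hF hF0 n (le_trans hu.2 hs.2)
            have : F u ≤ F s + 2 * c := by linarith [hFF'.2]
            have hgoal : F u + skSeq c F n u - c ≤ F s + c + skSeq c F n b := by linarith
            exact le_trans hgoal (le_max_right _ _)
          have hFs2 := (hM' s hst).2
          rcases max_cases H (F s + c + skSeq c F n b) with ⟨heq, _⟩ | ⟨heq, _⟩ <;>
            rw [heq] at hAs
          · have h1 : H + M - c ≤ KK :=
              le_trans (le_max_right _ _) (le_max_right _ _)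
            linarith
          · have h2 : skSeq c F n b ≤ KK := ihn
            linarith
  obtain ⟨k, hk⟩ := exists_nat_ge (t / δ)
  obtain ⟨G, _, hG⟩ := claim k
  refine ⟨G, fun n => ?_⟩
  have hkt : t ≤ (k:ℝ) * δ := by
    rw [div_le_iff₀ hδpos] at hk
    linarith
  have := hG n
  rwa [min_eq_right hkt] at this

noncomputable def skLim (c : ℝ) (F : ℝ → ℝ) : ℝ → ℝ := fun t => ⨆ n, skSeq c F n t

lemma seq_bddAbove_range (hc : 0 < c) (hF : Continuous F) (hF0 : F 0 ∈ Set.Icc (-c) c) (t : ℝ) :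
    BddAbove (Set.range fun n => skSeq c F n t) := by
  obtain ⟨G, hG⟩ := seq_bdd hc hF hF0 t
  exact ⟨G, by rintro x ⟨n, rfl⟩; exact hG n⟩

lemma seq_le_lim (hc : 0 < c) (hF : Continuous F) (hF0 : F 0 ∈ Set.Icc (-c) c) (n : ℕ) (t : ℝ) :
    skSeq c F n t ≤ skLim c F t := le_ciSup (seq_bddAbove_range hc hF hF0 t) n

lemma lim_nonneg (hc : 0 < c) (hF : Continuous F) (hF0 : F 0 ∈ Set.Icc (-c) c) (t : ℝ) :
    0 ≤ skLim c F t := seq_le_lim hc hF hF0 0 t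

lemma lim_mono (hc : 0 < c) (hF : Continuous F) (hF0 : F 0 ∈ Set.Icc (-c) c) :
    Monotone (skLim c F) := fun a b hab =>
  ciSup_le fun n => le_trans (seq_mono hc hF hF0 n hab) (seq_le_lim hc hF hF0 n b)

lemma lim_nonpos_zero (hc : 0 < c) (hF : Continuous F) (hF0 : F 0 ∈ Set.Icc (-c) c)
    {t : ℝ} (ht : t ≤ 0) : skLim c F t = 0 := by
  unfold skLim
  have : (fun n => skSeq c F n t) = fun _ => (0:ℝ) :=
    funext fun n => (seq_cont_zero hc hF hF0 n).2 t ht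
  rw [this, ciSup_const]

lemma lim_op_bdd (hc : 0 < c) (hF : Continuous F) (hF0 : F 0 ∈ Set.Icc (-c) c) (t : ℝ) :
    BddAbove (insert 0 ((fun s => F s + skLim c F s - c) '' Set.Icc 0 t)) :=
  op_bdd_of_mono hF (lim_mono hc hF hF0) t

lemma opF_seq_le (hc : 0 < c) (hF : Continuous F) (hF0 : F 0 ∈ Set.Icc (-c) c) (n : ℕ) (s : ℝ) :
    op c F (skSeq c F n) s ≤ op c F (skLim c F) s :=
  runSup_mono_fun (fun u _ => by have := seq_le_lim hc hF hF0 n u; linarith)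
    (lim_op_bdd hc hF hF0 s)

lemma opF_range_bdd (hc : 0 < c) (hF : Continuous F) (hF0 : F 0 ∈ Set.Icc (-c) c) (s : ℝ) :
    BddAbove (Set.range fun n => op c F (skSeq c F n) s) :=
  ⟨op c F (skLim c F) s, by rintro x ⟨n, rfl⟩; exact opF_seq_le hc hF hF0 n s⟩

lemma step1 (hc : 0 < c) (hF : Continuous F) (hF0 : F 0 ∈ Set.Icc (-c) c) (s : ℝ) :
    op c F (skLim c F) s = ⨆ n, op c F (skSeq c F n) s := by
  apply le_antisymm
  · apply runSup_le
    · refine le_trans ?_ (le_ciSup (opF_range_bdd hc hF hF0 s) 0)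
      exact runSup_nonneg (op_bdd_of_cont hF (seq_cont_zero hc hF hF0 0).1 s)
    · intro u hu
      have hn : ∀ n, skSeq c F n u ≤ (⨆ n, op c F (skSeq c F n) s) + c - F u := by
        intro n
        have h1 : F u + skSeq c F n u - c ≤ op c F (skSeq c F n) s :=
          le_runSup (op_bdd_of_cont hF (seq_cont_zero hc hF hF0 n).1 s) hu
        have h2 := le_ciSup (opF_range_bdd hc hF hF0 s) n
        linarith
      have := ciSup_le hn
      show F u + skLim c F u - c ≤ _
      unfold skLim
      linarith
  · exact ciSup_le fun n => opF_seq_le hc hF hF0 n s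

lemma opA_lim_mono (hc : 0 < c) (hF : Continuous F) (hF0 : F 0 ∈ Set.Icc (-c) c) :
    Monotone (op c F (skLim c F)) := op_mono_of_mono hF (lim_mono hc hF hF0)

lemma outer_bdd (hc : 0 < c) (hF : Continuous F) (hF0 : F 0 ∈ Set.Icc (-c) c) (t : ℝ) :
    BddAbove (insert 0 ((fun s => -F s + op c F (skLim c F) s - c) '' Set.Icc 0 t)) :=
  op_bdd_of_mono hF.neg (opA_lim_mono hc hF hF0) t

lemma lim_fixed (hc : 0 < c) (hF : Continuous F) (hF0 : F 0 ∈ Set.Icc (-c) c) (t : ℝ) :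
    op c (fun s => -F s) (op c F (skLim c F)) t = skLim c F t := by
  apply le_antisymm
  · apply runSup_le (lim_nonneg hc hF hF0 t)
    intro s hs
    show -F s + op c F (skLim c F) s - c ≤ skLim c F t
    have hA := step1 hc hF hF0 s
    have hn : ∀ n, op c F (skSeq c F n) s ≤ skLim c F t + F s + c := by
      intro n
      have hAncont : Continuous (op c F (skSeq c F n)) := by
        have h1 : Continuous (skSeq c F n) := (seq_cont_zero hc hF hF0 n).1
        have h2 : Continuous (fun u => F u + skSeq c F n u - c) := by continuity
        apply runSup_continuous h2
        have := (seq_cont_zero hc hF hF0 n).2 0 le_rfl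
        rw [this]; have := hF0.2; linarith
      have h1 : -F s + op c F (skSeq c F n) s - c ≤ op c (fun u => -F u) (op c F (skSeq c F n)) t :=
        le_runSup (op_bdd_of_cont hF.neg hAncont t) hs
      rw [← seq_succ] at h1
      have h2 := seq_le_lim hc hF hF0 (n+1) t
      linarith
    have h3 : op c F (skLim c F) s ≤ skLim c F t + F s + c := by
      rw [hA]; exact ciSup_le hn
    linarith
  · apply ciSup_le
    intro n
    cases n with
    | zero => exact runSup_nonneg (outer_bdd hc hF hF0 t)
    | succ n =>
      rw [seq_succ]
      refine runSup_mono_fun (fun s _ => ?_) (outer_bdd hc hF hF0 t)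
      show -F s + op c F (skSeq c F n) s - c ≤ -F s + op c F (skLim c F) s - c
      have := opF_seq_le hc hF hF0 n s
      linarith

end Main2
lemma runSup_at_zero (φ : ℝ → ℝ) : runSup φ 0 = max 0 (φ 0) := by
  unfold runSup
  rw [Set.Icc_self, Set.image_singleton]
  rw [show insert (0:ℝ) {φ 0} = ({0, φ 0} : Set ℝ) from rfl, csSup_pair]

lemma monotone_continuousAt {g : ℝ → ℝ} {t : ℝ} (hm : Monotone g)
    (hr : ∀ ε > (0:ℝ), ∃ s, t < s ∧ g s < g t + ε)
    (hl : ∀ ε > (0:ℝ), ∃ s, s < t ∧ g t - ε < g s) : ContinuousAt g t := by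
  rw [Metric.continuousAt_iff]
  intro ε hε
  obtain ⟨s₁, hs₁, hg₁⟩ := hr ε hε
  obtain ⟨s₂, hs₂, hg₂⟩ := hl ε hε
  refine ⟨min (s₁ - t) (t - s₂), lt_min (by linarith) (by linarith), fun x hx => ?_⟩
  rw [Real.dist_eq] at hx ⊢
  have hx' := abs_lt.1 hx
  have h1 := min_le_left (s₁ - t) (t - s₂)
  have h2 := min_le_right (s₁ - t) (t - s₂)
  have hxs₁ : x ≤ s₁ := by linarith
  have hxs₂ : s₂ ≤ x := by linarith
  have ha := hm hxs₁
  have hb := hm hxs₂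
  have hc1 := hm (le_of_lt hs₁)
  have hc2 := hm (le_of_lt hs₂)
  rw [abs_lt]
  constructor <;> linarith

section PairLemmas

variable {c : ℝ} {F₁ F₂ P Q : ℝ → ℝ}

lemma pair_bddP (hF₁ : Continuous F₁) (monoQ : Monotone Q) (t : ℝ) :
    BddAbove (insert 0 ((fun s => F₁ s + Q s - c) '' Set.Icc 0 t)) :=
  op_bdd_of_mono hF₁ monoQ t

lemma pair_E2 (hF₁ : Continuous F₁) (monoQ : Monotone Q)
    (relP : ∀ s, P s = op c F₁ Q s) {t : ℝ} (ht : 0 ≤ t) :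
    F₁ t + Q t - c ≤ P t := by
  rw [relP t]
  exact le_runSup (pair_bddP hF₁ monoQ t) ⟨ht, le_rfl⟩

lemma pair_nonneg (hF₁ : Continuous F₁) (monoQ : Monotone Q)
    (relP : ∀ s, P s = op c F₁ Q s) (t : ℝ) : 0 ≤ P t := by
  rw [relP t]; exact runSup_nonneg (pair_bddP hF₁ monoQ t)

lemma pair_neg_zero (relP : ∀ s, P s = op c F₁ Q s) {t : ℝ} (ht : t < 0) : P t = 0 := by
  rw [relP t]; exact runSup_of_neg ht

lemma pair_zero (hc : 0 < c) (hF₁0 : F₁ 0 ∈ Set.Icc (-c) c) (h12 : ∀ s, F₂ s = -F₁ s)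
    (relP : ∀ s, P s = op c F₁ Q s) (relQ : ∀ s, Q s = op c F₂ P s) :
    P 0 = 0 ∧ Q 0 = 0 := by
  have hP : P 0 = max 0 (F₁ 0 + Q 0 - c) := by rw [relP 0]; exact runSup_at_zero _
  have hQ : Q 0 = max 0 (F₂ 0 + P 0 - c) := by rw [relQ 0]; exact runSup_at_zero _
  rw [h12 0] at hQ
  have h1 := hF₁0.1
  have h2 := hF₁0.2
  rcases max_cases 0 (F₁ 0 + Q 0 - c) with ⟨e1, l1⟩ | ⟨e1, l1⟩ <;>
    rcases max_cases 0 (-F₁ 0 + P 0 - c) with ⟨e2, l2⟩ | ⟨e2, l2⟩ <;>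
    rw [e1] at hP <;> rw [e2] at hQ <;> constructor <;> linarith

lemma right_est (hF₁ : Continuous F₁) (monoP : Monotone P) (monoQ : Monotone Q)
    (relP : ∀ s, P s = op c F₁ Q s) {t : ℝ} (ht : 0 ≤ t) :
    sInf (P '' Set.Ioi t) ≤ max (P t) (F₁ t + sInf (Q '' Set.Ioi t) - c) := by
  set aQ := sInf (Q '' Set.Ioi t) with haQ
  apply le_max_of_forall_eps
  intro ε hε
  obtain ⟨δ, hδpos, hδ⟩ := Metric.continuousAt_iff.1 (hF₁.continuousAt (x := t)) (ε/2)
    (by linarith)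
  have hneQ : (Q '' Set.Ioi t).Nonempty := Set.nonempty_Ioi.image Q
  obtain ⟨x, ⟨s', hs', rfl⟩, hx⟩ := exists_lt_of_csInf_lt hneQ
    (lt_add_of_pos_right aQ (by linarith : (0:ℝ) < ε/2))
  set s₀ := min s' (t + δ/2) with hs₀def
  have hts₀ : t < s₀ := lt_min hs' (by linarith)
  have hQs₀ : Q s₀ < aQ + ε/2 := lt_of_le_of_lt (monoQ (min_le_left _ _)) hx
  have hbbP : BddBelow (P '' Set.Ioi t) := ⟨P t, by rintro y ⟨u, hu, rfl⟩; exact monoP (le_of_lt hu)⟩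
  have h1 : sInf (P '' Set.Ioi t) ≤ P s₀ := csInf_le hbbP ⟨s₀, hts₀, rfl⟩
  have hsplit : P s₀ = max (P t) (sSup ((fun s => F₁ s + Q s - c) '' Set.Icc t s₀)) := by
    rw [relP s₀, op_def, runSup_split ht (le_of_lt hts₀) (pair_bddP hF₁ monoQ s₀), ← op_def, ← relP t]
  have h2 : sSup ((fun s => F₁ s + Q s - c) '' Set.Icc t s₀) ≤ F₁ t + aQ - c + ε := by
    apply csSup_le ((Set.nonempty_Icc.2 (le_of_lt hts₀)).image _)
    rintro y ⟨u, hu, rfl⟩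
    show F₁ u + Q u - c ≤ F₁ t + aQ - c + ε
    have hud : dist u t < δ := by
      rw [Real.dist_eq, abs_lt]
      have := hu.1; have h3 : u ≤ s₀ := hu.2
      have h4 : s₀ ≤ t + δ/2 := min_le_right _ _
      constructor <;> linarith
    have hF := hδ hud
    rw [Real.dist_eq] at hF
    have hF' := abs_lt.1 hF
    have hQu : Q u ≤ Q s₀ := monoQ hu.2
    linarith
  calc sInf (P '' Set.Ioi t) ≤ P s₀ := h1
    _ ≤ max (P t) (F₁ t + aQ - c + ε) := by rw [hsplit]; exact max_le_max le_rfl h2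

lemma left_est (hF₁ : Continuous F₁) (monoP : Monotone P) (monoQ : Monotone Q)
    (relP : ∀ s, P s = op c F₁ Q s) {t : ℝ} (ht : 0 < t) :
    P t ≤ max (sSup (P '' Set.Iio t)) (F₁ t + Q t - c) := by
  apply le_max_of_forall_eps
  intro ε hε
  obtain ⟨δ, hδpos, hδ⟩ := Metric.continuousAt_iff.1 (hF₁.continuousAt (x := t)) ε hε
  set t' := max (t - δ/2) 0 with ht'def
  have ht'0 : 0 ≤ t' := le_max_right _ _
  have ht't : t' < t := max_lt (by linarith) ht
  have hbP : BddAbove (P '' Set.Iio t) := ⟨P t, by rintro y ⟨u, hu, rfl⟩; exact monoP (le_of_lt hu)⟩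
  have hsplit : P t = max (P t') (sSup ((fun s => F₁ s + Q s - c) '' Set.Icc t' t)) := by
    rw [relP t, op_def, runSup_split ht'0 (le_of_lt ht't) (pair_bddP hF₁ monoQ t), ← op_def, ← relP t']
  have h1 : P t' ≤ sSup (P '' Set.Iio t) := le_csSup hbP ⟨t', ht't, rfl⟩
  have h2 : sSup ((fun s => F₁ s + Q s - c) '' Set.Icc t' t) ≤ F₁ t + Q t - c + ε := by
    apply csSup_le ((Set.nonempty_Icc.2 (le_of_lt ht't)).image _)
    rintro y ⟨u, hu, rfl⟩
    show F₁ u + Q u - c ≤ F₁ t + Q t - c + ε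
    have hud : dist u t < δ := by
      rw [Real.dist_eq, abs_lt]
      have h3 : t - δ/2 ≤ t' := le_max_left _ _
      have := hu.1; have := hu.2
      constructor <;> linarith
    have hF := hδ hud
    rw [Real.dist_eq] at hF
    have hF' := abs_lt.1 hF
    have hQu : Q u ≤ Q t := monoQ hu.2
    linarith
  rw [hsplit]
  exact max_le (le_trans h1 (le_max_left _ _))
    (le_trans h2 (by apply le_max_right))

lemma left_rel (hF₁ : Continuous F₁) (hF₂ : Continuous F₂) (h12 : ∀ s, F₂ s = -F₁ s)
    (monoP : Monotone P) (monoQ : Monotone Q)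
    (relP : ∀ s, P s = op c F₁ Q s) (relQ : ∀ s, Q s = op c F₂ P s) {t : ℝ} (ht : 0 < t) :
    sSup (P '' Set.Iio t) ≤ sSup (Q '' Set.Iio t) + F₁ t + c := by
  apply le_of_forall_pos_le_add
  intro ε hε
  obtain ⟨δ, hδpos, hδ⟩ := Metric.continuousAt_iff.1 (hF₁.continuousAt (x := t)) ε hε
  have hbQ : BddAbove (Q '' Set.Iio t) := ⟨Q t, by rintro y ⟨u, hu, rfl⟩; exact monoQ (le_of_lt hu)⟩
  apply csSup_le (Set.nonempty_Iio.image P)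
  rintro y ⟨u, hu, rfl⟩
  set v := max u (max (t - δ/2) 0) with hvdef
  have hv0 : 0 ≤ v := le_trans (le_max_right _ _) (le_max_right _ _)
  have hvt : v < t := max_lt hu (max_lt (by linarith) ht)
  have hvd : dist v t < δ := by
    rw [Real.dist_eq, abs_lt]
    have h3 : t - δ/2 ≤ v := le_trans (le_max_left _ _) (le_max_right _ _)
    constructor <;> linarith
  have hF := hδ hvd
  rw [Real.dist_eq] at hF
  have hF' := abs_lt.1 hF
  have hE1 : F₂ v + P v - c ≤ Q v := pair_E2 hF₂ monoP relQ hv0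
  rw [h12 v] at hE1
  have h4 : P u ≤ P v := monoP (le_max_left _ _)
  have h5 : Q v ≤ sSup (Q '' Set.Iio t) := le_csSup hbQ ⟨v, hvt, rfl⟩
  linarith

end PairLemmas
section PairLemmas2

variable {c : ℝ} {F₁ F₂ P Q : ℝ → ℝ}

lemma no_right_jump (hc : 0 < c) (hF₁ : Continuous F₁) (hF₂ : Continuous F₂)
    (h12 : ∀ s, F₂ s = -F₁ s)
    (monoP : Monotone P) (monoQ : Monotone Q)
    (relP : ∀ s, P s = op c F₁ Q s) (relQ : ∀ s, Q s = op c F₂ P s) {t : ℝ} (ht : 0 ≤ t) :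
    sInf (P '' Set.Ioi t) = P t ∧ sInf (Q '' Set.Ioi t) = Q t := by
  set aP := sInf (P '' Set.Ioi t) with haP
  set aQ := sInf (Q '' Set.Ioi t) with haQ
  have hneP : (P '' Set.Ioi t).Nonempty := Set.nonempty_Ioi.image P
  have hneQ : (Q '' Set.Ioi t).Nonempty := Set.nonempty_Ioi.image Q
  have hPa : P t ≤ aP := le_csInf hneP (by rintro y ⟨u, hu, rfl⟩; exact monoP (le_of_lt hu))
  have hQa : Q t ≤ aQ := le_csInf hneQ (by rintro y ⟨u, hu, rfl⟩; exact monoQ (le_of_lt hu))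
  have R1 : aP ≤ max (P t) (F₁ t + aQ - c) := right_est hF₁ monoP monoQ relP ht
  have R2' : aQ ≤ max (Q t) (F₂ t + aP - c) := right_est hF₂ monoQ monoP relQ ht
  rw [h12 t] at R2'
  have E2 : F₁ t + Q t - c ≤ P t := pair_E2 hF₁ monoQ relP ht
  have E1 : F₂ t + P t - c ≤ Q t := pair_E2 hF₂ monoP relQ ht
  rw [h12 t] at E1
  have hPeq : aP = P t := by
    by_contra hne
    have hlt : P t < aP := lt_of_le_of_ne hPa (Ne.symm hne)
    have h1 : aP ≤ F₁ t + aQ - c := by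
      rcases max_cases (P t) (F₁ t + aQ - c) with ⟨he, _⟩ | ⟨he, _⟩ <;> rw [he] at R1 <;> linarith
    have h2 : Q t < aQ := by linarith
    have h3 : aQ ≤ -F₁ t + aP - c := by
      rcases max_cases (Q t) (-F₁ t + aP - c) with ⟨he, _⟩ | ⟨he, _⟩ <;> rw [he] at R2' <;> linarith
    linarith
  refine ⟨hPeq, ?_⟩
  by_contra hne
  have hlt : Q t < aQ := lt_of_le_of_ne hQa (Ne.symm hne)
  have h3 : aQ ≤ -F₁ t + aP - c := by
    rcases max_cases (Q t) (-F₁ t + aP - c) with ⟨he, _⟩ | ⟨he, _⟩ <;> rw [he] at R2' <;> linarith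
  rw [hPeq] at h3
  linarith

lemma no_left_jump (hc : 0 < c) (hF₁ : Continuous F₁) (hF₂ : Continuous F₂)
    (h12 : ∀ s, F₂ s = -F₁ s)
    (monoP : Monotone P) (monoQ : Monotone Q)
    (relP : ∀ s, P s = op c F₁ Q s) (relQ : ∀ s, Q s = op c F₂ P s) {t : ℝ} (ht : 0 < t) :
    sSup (P '' Set.Iio t) = P t ∧ sSup (Q '' Set.Iio t) = Q t := by
  have h21 : ∀ s, F₁ s = -F₂ s := fun s => by rw [h12 s]; ring
  set lP := sSup (P '' Set.Iio t) with hlP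
  set lQ := sSup (Q '' Set.Iio t) with hlQ
  have hneP : (P '' Set.Iio t).Nonempty := Set.nonempty_Iio.image P
  have hneQ : (Q '' Set.Iio t).Nonempty := Set.nonempty_Iio.image Q
  have hPl : lP ≤ P t := csSup_le hneP (by rintro y ⟨u, hu, rfl⟩; exact monoP (le_of_lt hu))
  have hQl : lQ ≤ Q t := csSup_le hneQ (by rintro y ⟨u, hu, rfl⟩; exact monoQ (le_of_lt hu))
  have L1 : P t ≤ max lP (F₁ t + Q t - c) := left_est hF₁ monoP monoQ relP ht
  have L2 : Q t ≤ max lQ (F₂ t + P t - c) := left_est hF₂ monoQ monoP relQ ht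
  rw [h12 t] at L2
  have L3 : lP ≤ lQ + F₁ t + c := left_rel hF₁ hF₂ h12 monoP monoQ relP relQ ht
  have L4 : lQ ≤ lP + F₂ t + c := left_rel hF₂ hF₁ h21 monoQ monoP relQ relP ht
  rw [h12 t] at L4
  have hPeq : lP = P t := by
    by_contra hne
    have hlt : lP < P t := lt_of_le_of_ne hPl hne
    have h1 : P t ≤ F₁ t + Q t - c := by
      rcases max_cases lP (F₁ t + Q t - c) with ⟨he, _⟩ | ⟨he, _⟩ <;> rw [he] at L1 <;> linarith
    rcases eq_or_lt_of_le hQl with heq | hlt2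
    · linarith
    · have h2 : Q t ≤ -F₁ t + P t - c := by
        rcases max_cases lQ (-F₁ t + P t - c) with ⟨he, _⟩ | ⟨he, _⟩ <;> rw [he] at L2 <;> linarith
      linarith
  refine ⟨hPeq, ?_⟩
  by_contra hne
  have hlt : lQ < Q t := lt_of_le_of_ne hQl hne
  have h2 : Q t ≤ -F₁ t + P t - c := by
    rcases max_cases lQ (-F₁ t + P t - c) with ⟨he, _⟩ | ⟨he, _⟩ <;> rw [he] at L2 <;> linarith
  rw [← hPeq] at h2
  linarith

lemma cont_of_pair (hc : 0 < c) (hF₁ : Continuous F₁) (hF₂ : Continuous F₂)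
    (h12 : ∀ s, F₂ s = -F₁ s) (hF₁0 : F₁ 0 ∈ Set.Icc (-c) c)
    (monoP : Monotone P) (monoQ : Monotone Q)
    (relP : ∀ s, P s = op c F₁ Q s) (relQ : ∀ s, Q s = op c F₂ P s) :
    Continuous Q := by
  rw [continuous_iff_continuousAt]
  intro t
  rcases lt_or_ge t 0 with ht | ht
  · have hev : (fun _ => (0:ℝ)) =ᶠ[nhds t] Q := by
      filter_upwards [Iio_mem_nhds ht] with x hx
      exact (pair_neg_zero relQ hx).symm
    exact continuousAt_const.congr hev
  · have hrj := no_right_jump hc hF₁ hF₂ h12 monoP monoQ relP relQ ht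
    apply monotone_continuousAt monoQ
    · intro ε hε
      have hneQ : (Q '' Set.Ioi t).Nonempty := Set.nonempty_Ioi.image Q
      obtain ⟨y, ⟨s, hs, rfl⟩, hy⟩ := exists_lt_of_csInf_lt hneQ
        (by rw [hrj.2]; linarith : sInf (Q '' Set.Ioi t) < Q t + ε)
      exact ⟨s, hs, hy⟩
    · intro ε hε
      rcases eq_or_lt_of_le ht with rfl | htpos
      · refine ⟨-1, by norm_num, ?_⟩
        have h1 : Q (-1) = 0 := pair_neg_zero relQ (by norm_num)
        have h2 : Q 0 = 0 := (pair_zero hc hF₁0 h12 relP relQ).2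
        rw [h1, h2]; linarith
      · have hlj := no_left_jump hc hF₁ hF₂ h12 monoP monoQ relP relQ htpos
        have hneQ : (Q '' Set.Iio t).Nonempty := Set.nonempty_Iio.image Q
        obtain ⟨y, ⟨s, hs, rfl⟩, hy⟩ := exists_lt_of_lt_csSup hneQ
          (by rw [hlj.2]; linarith : Q t - ε < sSup (Q '' Set.Iio t))
        exact ⟨s, hs, hy⟩

/-- flat-off for a pair satisfying the fixed-point relation -/
lemma flat_of_rel (hF₁ : Continuous F₁) (hQ : Continuous Q) (monoP : Monotone P)
    (monoQ : Monotone Q) (relP : ∀ s, P s = op c F₁ Q s) {t₁ t₂ : ℝ}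
    (ht₁ : 0 ≤ t₁) (h12 : t₁ ≤ t₂)
    (hy : ∀ s, t₁ ≤ s → s ≤ t₂ → F₁ s - P s + Q s < c) : P t₁ = P t₂ := by
  by_contra hne
  have hlt : P t₁ < P t₂ := lt_of_le_of_ne (monoP h12) hne
  have hsplit : P t₂ = max (P t₁) (sSup ((fun s => F₁ s + Q s - c) '' Set.Icc t₁ t₂)) := by
    rw [relP t₂, op_def, runSup_split ht₁ h12 (pair_bddP hF₁ monoQ t₂), ← op_def, ← relP t₁]
  have heq : P t₂ = sSup ((fun s => F₁ s + Q s - c) '' Set.Icc t₁ t₂) := by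
    rcases max_cases (P t₁) (sSup ((fun s => F₁ s + Q s - c) '' Set.Icc t₁ t₂)) with
      ⟨he, _⟩ | ⟨he, _⟩ <;> rw [he] at hsplit
    · linarith
    · exact hsplit
  obtain ⟨s, hs, hmax⟩ := isCompact_Icc.exists_isMaxOn (Set.nonempty_Icc.2 h12)
    (Continuous.continuousOn (by continuity) :
      ContinuousOn (fun s => F₁ s + Q s - c) (Set.Icc t₁ t₂))
  have hsup_le : sSup ((fun s => F₁ s + Q s - c) '' Set.Icc t₁ t₂) ≤ F₁ s + Q s - c :=
    csSup_le ((Set.nonempty_Icc.2 h12).image _) (by rintro y ⟨u, hu, rfl⟩; exact hmax hu)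
  have h1 : F₁ s - P s + Q s < c := hy s hs.1 hs.2
  have h2 : P s ≤ P t₂ := monoP hs.2
  have h3 : P t₂ ≤ F₁ s + Q s - c := by rw [heq]; exact hsup_le
  linarith

/-- any solution satisfies the fixed-point characterization -/
lemma char_sol {P y : ℝ → ℝ} {c t : ℝ} (hP : Continuous P) (monoP : Monotone P)
    (hP0 : P 0 = 0) (ht : 0 ≤ t) (hyle : ∀ s, 0 ≤ s → s ≤ t → y s ≤ c)
    (hflat : ∀ t₁ t₂, 0 ≤ t₁ → t₁ ≤ t₂ → t₂ ≤ t → (∀ s, t₁ ≤ s → s ≤ t₂ → y s < c) →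
      P t₁ = P t₂) :
    P t = runSup (fun s => P s + y s - c) t := by
  set φ := fun s => P s + y s - c with hφ
  have hPt : 0 ≤ P t := hP0 ▸ monoP ht
  have hbdd : BddAbove (insert 0 (φ '' Set.Icc 0 t)) := by
    apply bddAbove_ins (C := P t)
    intro s hs
    have := hyle s hs.1 hs.2
    have := monoP hs.2
    simp only [hφ]
    linarith
  have hM_le : runSup φ t ≤ P t := by
    apply runSup_le hPt
    intro s hs
    have := hyle s hs.1 hs.2
    have := monoP hs.2
    simp only [hφ]
    linarith
  have hM0 : 0 ≤ runSup φ t := runSup_nonneg hbdd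
  by_contra hne
  have hlt : runSup φ t < P t := lt_of_le_of_ne hM_le (Ne.symm hne)
  set M := runSup φ t with hM
  set S := {s | s ∈ Set.Icc 0 t ∧ P s ≤ M} with hS
  have hSne : S.Nonempty := ⟨0, ⟨⟨le_rfl, ht⟩, le_trans (le_of_eq hP0) hM0⟩⟩
  have hSbdd : BddAbove S := ⟨t, fun s hs => hs.1.2⟩
  have hSclosed : IsClosed S := by
    have : S = Set.Icc 0 t ∩ {s | P s ≤ M} := by ext s; simp [hS, Set.mem_Icc]; try tauto
    rw [this]
    exact isClosed_Icc.inter (isClosed_le hP continuous_const)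
  set u := sSup S with hu
  have huS : u ∈ S := hSclosed.csSup_mem hSne hSbdd
  have hut : u < t := by
    rcases lt_or_eq_of_le huS.1.2 with h | h
    · exact h
    · exfalso; rw [h] at huS; linarith [huS.2]
  have hflat_above : ∀ u', u < u' → u' ≤ t → P u' = P t := by
    intro u' huu' hu't
    apply hflat u' t (le_trans huS.1.1 (le_of_lt huu')) hu't le_rfl
    intro s hs1 hs2
    have hsS : s ∉ S := fun hmem => absurd (le_csSup hSbdd hmem) (not_le.2 (by linarith))
    have hsIcc : s ∈ Set.Icc 0 t := ⟨le_trans huS.1.1 (le_of_lt (lt_of_lt_of_le huu' hs1)), hs2⟩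
    have hPs : M < P s := by
      by_contra hle
      push_neg at hle
      exact hsS ⟨hsIcc, hle⟩
    have hφs : φ s ≤ M := le_runSup hbdd hsIcc
    simp only [hφ] at hφs
    linarith
  -- continuity contradiction
  have hPu : P u ≤ M := huS.2
  have hPuPt : P u < P t := by linarith
  obtain ⟨δ, hδpos, hδ⟩ := Metric.continuousAt_iff.1 (hP.continuousAt (x := u)) (P t - P u)
    (by linarith)
  set u' := min (u + δ/2) t with hu'
  have huu' : u < u' := lt_min (by linarith) hut
  have hu't : u' ≤ t := min_le_right _ _
  have hPu' : P u' = P t := hflat_above u' huu' hu't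
  have hdist : dist u' u < δ := by
    rw [Real.dist_eq, abs_lt]
    have h1 : u' ≤ u + δ/2 := min_le_left _ _
    constructor <;> linarith
  have := hδ hdist
  rw [Real.dist_eq, hPu', abs_lt] at this
  linarith

end PairLemmas2
def IsSol (c : ℝ) (F P Q : ℝ → ℝ) : Prop :=
  Continuous P ∧ Continuous Q ∧ Monotone P ∧ Monotone Q ∧
  (∀ t ≤ (0:ℝ), P t = 0) ∧ (∀ t ≤ (0:ℝ), Q t = 0) ∧
  (∀ t, 0 ≤ t → F t - P t + Q t ∈ Set.Icc (-c) c) ∧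
  (∀ t₁ t₂, 0 ≤ t₁ → t₁ ≤ t₂ → (∀ s, t₁ ≤ s → s ≤ t₂ → F s - P s + Q s < c) → P t₁ = P t₂) ∧
  (∀ t₁ t₂, 0 ≤ t₁ → t₁ ≤ t₂ → (∀ s, t₁ ≤ s → s ≤ t₂ → -c < F s - P s + Q s) → Q t₁ = Q t₂)

section Exists

variable {c : ℝ} {F : ℝ → ℝ}

theorem exists_sol (hc : 0 < c) (hF : Continuous F) (hF0 : F 0 ∈ Set.Icc (-c) c) :
    IsSol c F (op c F (skLim c F)) (skLim c F) := by
  set Q := skLim c F with hQdef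
  set P := op c F (skLim c F) with hPdef
  have relP : ∀ s, P s = op c F Q s := fun s => rfl
  have relQ : ∀ s, Q s = op c (fun u => -F u) P s := fun s => (lim_fixed hc hF hF0 s).symm
  have h12 : ∀ s, (fun u => -F u) s = -F s := fun _ => rfl
  have h21 : ∀ s, F s = -((fun u => -F u) s) := fun s => by simp
  have monoP : Monotone P := opA_lim_mono hc hF hF0
  have monoQ : Monotone Q := lim_mono hc hF hF0
  have hF0' : (fun u => -F u) 0 ∈ Set.Icc (-c) c := by
    simp only [Set.mem_Icc] at hF0 ⊢
    constructor <;> linarith [hF0.1, hF0.2]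
  have contQ : Continuous Q := cont_of_pair hc hF hF.neg h12 hF0 monoP monoQ relP relQ
  have contP : Continuous P := cont_of_pair hc hF.neg hF h21 hF0' monoQ monoP relQ relP
  have zeros := pair_zero hc hF0 h12 relP relQ
  have zeroP : ∀ t ≤ (0:ℝ), P t = 0 := by
    intro t ht
    rcases lt_or_eq_of_le ht with h | h
    · exact pair_neg_zero relP h
    · rw [h]; exact zeros.1
  have zeroQ : ∀ t ≤ (0:ℝ), Q t = 0 := by
    intro t ht
    rcases lt_or_eq_of_le ht with h | h
    · exact pair_neg_zero relQ h
    · rw [h]; exact zeros.2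
  refine ⟨contP, contQ, monoP, monoQ, zeroP, zeroQ, ?_, ?_, ?_⟩
  · intro t ht
    have E2 : F t + Q t - c ≤ P t := pair_E2 hF monoQ relP ht
    have E1 : -F t + P t - c ≤ Q t := pair_E2 hF.neg monoP relQ ht
    exact Set.mem_Icc.2 ⟨by linarith, by linarith⟩
  · intro t₁ t₂ ht₁ h12' hy
    exact flat_of_rel hF contQ monoP monoQ relP ht₁ h12' hy
  · intro t₁ t₂ ht₁ h12' hy
    refine flat_of_rel hF.neg contP monoQ monoP relQ ht₁ h12' ?_
    intro s hs1 hs2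
    have := hy s hs1 hs2
    show -F s - Q s + P s < c
    linarith

end Exists

section Unique

variable {c : ℝ} {F : ℝ → ℝ}

lemma sol_char_P {P Q : ℝ → ℝ} (hsol : IsSol c F P Q) {t : ℝ} (ht : 0 ≤ t) :
    P t = runSup (fun s => P s + (F s - P s + Q s) - c) t := by
  obtain ⟨h1, h2, h3, h4, h5, h6, h7, h8, h9⟩ := hsol
  exact char_sol h1 h3 (h5 0 le_rfl) ht
    (fun s hs0 _ => (Set.mem_Icc.1 (h7 s hs0)).2)
    (fun t₁ t₂ ha hb _ hy => h8 t₁ t₂ ha hb hy)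

lemma sol_char_Q {P Q : ℝ → ℝ} (hsol : IsSol c F P Q) {t : ℝ} (ht : 0 ≤ t) :
    Q t = runSup (fun s => Q s + (-(F s - P s + Q s)) - c) t := by
  obtain ⟨h1, h2, h3, h4, h5, h6, h7, h8, h9⟩ := hsol
  exact char_sol h2 h4 (h6 0 le_rfl) ht
    (fun s hs0 _ => by have := (Set.mem_Icc.1 (h7 s hs0)).1; linarith)
    (fun t₁ t₂ ha hb _ hy => h9 t₁ t₂ ha hb (fun s hs1 hs2 => by have := hy s hs1 hs2; linarith))

lemma y_le {P₁ Q₁ P₂ Q₂ : ℝ → ℝ} (hF : Continuous F)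
    (sol1 : IsSol c F P₁ Q₁) (sol2 : IsSol c F P₂ Q₂) (hc : 0 < c) :
    ∀ t, 0 ≤ t → F t - P₁ t + Q₁ t ≤ F t - P₂ t + Q₂ t := by
  obtain ⟨c1P, c1Q, m1P, m1Q, z1P, z1Q, i1, f1P, f1Q⟩ := sol1
  obtain ⟨c2P, c2Q, m2P, m2Q, z2P, z2Q, i2, f2P, f2Q⟩ := sol2
  intro T hT
  by_contra hgt
  push_neg at hgt
  set y₁ := fun s => F s - P₁ s + Q₁ s with hy₁
  set y₂ := fun s => F s - P₂ s + Q₂ s with hy₂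
  have hy₁c : Continuous y₁ := (hF.sub c1P).add c1Q
  have hy₂c : Continuous y₂ := (hF.sub c2P).add c2Q
  set d := fun s => y₁ s - y₂ s with hd
  have hdc : Continuous d := hy₁c.sub hy₂c
  obtain ⟨smax, hsmaxIcc, hmax⟩ := isCompact_Icc.exists_isMaxOn (Set.nonempty_Icc.2 hT)
    hdc.continuousOn
  set ε := d smax with hε
  have hεpos : 0 < ε := lt_of_lt_of_le (by simp only [hd, hy₁, hy₂]; linarith)
    (hmax ⟨hT, le_rfl⟩)
  set S := {s | s ∈ Set.Icc 0 T ∧ ε ≤ d s} with hS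
  have hSne : S.Nonempty := ⟨smax, hsmaxIcc, le_rfl⟩
  have hSbddB : BddBelow S := ⟨0, fun s hs => hs.1.1⟩
  have hSclosed : IsClosed S := by
    have : S = Set.Icc 0 T ∩ {s | ε ≤ d s} := by ext s; simp [hS]; try tauto
    rw [this]
    exact isClosed_Icc.inter (isClosed_le continuous_const hdc)
  set tS := sInf S with htS
  have htSS : tS ∈ S := hSclosed.csInf_mem hSne hSbddB
  have hdtS : d tS = ε := le_antisymm (hmax htSS.1) htSS.2
  have hd0 : d 0 = 0 := by
    simp only [hd, hy₁, hy₂, z1P 0 le_rfl, z1Q 0 le_rfl, z2P 0 le_rfl, z2Q 0 le_rfl]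
    ring
  have htSpos : 0 < tS := by
    rcases lt_or_eq_of_le htSS.1.1 with h | h
    · exact h
    · exfalso; rw [← h] at hdtS; rw [hd0] at hdtS; linarith
  have hio2 := Set.mem_Icc.1 (i2 tS htSS.1.1)
  have hio1 := Set.mem_Icc.1 (i1 tS htSS.1.1)
  have hytS : -c < y₁ tS := by
    have : y₁ tS = y₂ tS + ε := by simp only [hd] at hdtS; linarith
    simp only [hy₂] at this ⊢
    linarith [hio2.1]
  have hztS : y₂ tS < c := by
    have : y₂ tS = y₁ tS - ε := by simp only [hd] at hdtS; linarith
    simp only [hy₁] at this ⊢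
    linarith [hio1.2]
  have hWopen : IsOpen {s | -c < y₁ s ∧ y₂ s < c} :=
    (isOpen_lt continuous_const hy₁c).inter (isOpen_lt hy₂c continuous_const)
  obtain ⟨δ, hδpos, hball⟩ := Metric.isOpen_iff.1 hWopen tS ⟨hytS, hztS⟩
  set a := max (tS - δ/2) 0 with ha
  have ha0 : 0 ≤ a := le_max_right _ _
  have hatS : a < tS := max_lt (by linarith) htSpos
  have haIcc : a ∈ Set.Icc 0 T := ⟨ha0, le_trans (le_of_lt hatS) htSS.1.2⟩
  have hsub : ∀ s, a ≤ s → s ≤ tS → -c < y₁ s ∧ y₂ s < c := by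
    intro s hs1 hs2
    apply hball
    rw [Metric.mem_ball, Real.dist_eq, abs_lt]
    have h3 : tS - δ/2 ≤ a := le_max_left _ _
    constructor <;> linarith
  have hQ1flat : Q₁ a = Q₁ tS := f1Q a tS ha0 (le_of_lt hatS)
    (fun s hs1 hs2 => (hsub s hs1 hs2).1)
  have hP2flat : P₂ a = P₂ tS := f2P a tS ha0 (le_of_lt hatS)
    (fun s hs1 hs2 => (hsub s hs1 hs2).2)
  have hda : d a < ε := by
    have haS : a ∉ S := fun hmem => absurd (csInf_le hSbddB hmem) (not_le.2 hatS)
    by_contra hle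
    push_neg at hle
    exact haS ⟨haIcc, hle⟩
  have hmono1 : P₁ a ≤ P₁ tS := m1P (le_of_lt hatS)
  have hmono2 : Q₂ a ≤ Q₂ tS := m2Q (le_of_lt hatS)
  have : d tS ≤ d a := by
    simp only [hd, hy₁, hy₂]
    linarith
  linarith

lemma P_le {P₁ Q₁ P₂ Q₂ : ℝ → ℝ} (hF : Continuous F) (hc : 0 < c)
    (sol1 : IsSol c F P₁ Q₁) (sol2 : IsSol c F P₂ Q₂)
    (hyeq : ∀ t, 0 ≤ t → F t - P₁ t + Q₁ t = F t - P₂ t + Q₂ t) :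
    ∀ t, 0 ≤ t → P₂ t ≤ P₁ t := by
  have c1P := sol1.1
  obtain ⟨c2P, c2Q, m2P, m2Q, z2P, z2Q, i2, f2P, f2Q⟩ := sol2
  have c1Q := sol1.2.1
  have m1P := sol1.2.2.1
  have m1Q := sol1.2.2.2.1
  have z1P := sol1.2.2.2.2.1
  have z1Q := sol1.2.2.2.2.2.1
  intro T hT
  by_contra hgt
  push_neg at hgt
  set y := fun s => F s - P₂ s + Q₂ s with hy
  have hyc : Continuous y := (hF.sub c2P).add c2Q
  set D := fun s => P₂ s - P₁ s with hD
  have hDc : Continuous D := c2P.sub c1P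
  have hQD : ∀ s, 0 ≤ s → Q₂ s - Q₁ s = D s := by
    intro s hs
    have := hyeq s hs
    simp only [hD]
    linarith
  obtain ⟨smax, hsmaxIcc, hmax⟩ := isCompact_Icc.exists_isMaxOn (Set.nonempty_Icc.2 hT)
    hDc.continuousOn
  set ε := D smax with hε
  have hεpos : 0 < ε := lt_of_lt_of_le (by simp only [hD]; linarith) (hmax ⟨hT, le_rfl⟩)
  set S := {s | s ∈ Set.Icc 0 T ∧ ε ≤ D s} with hS
  have hSne : S.Nonempty := ⟨smax, hsmaxIcc, le_rfl⟩
  have hSbddB : BddBelow S := ⟨0, fun s hs => hs.1.1⟩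
  have hSclosed : IsClosed S := by
    have : S = Set.Icc 0 T ∩ {s | ε ≤ D s} := by ext s; simp [hS]; try tauto
    rw [this]
    exact isClosed_Icc.inter (isClosed_le continuous_const hDc)
  set tS := sInf S with htS
  have htSS : tS ∈ S := hSclosed.csInf_mem hSne hSbddB
  have hDtS : D tS = ε := le_antisymm (hmax htSS.1) htSS.2
  have htS0 : 0 ≤ tS := htSS.1.1
  have htSpos : 0 < tS := by
    rcases lt_or_eq_of_le htS0 with h | h
    · exact h
    · exfalso
      have : D 0 = 0 := by simp only [hD, z1P 0 le_rfl, z2P 0 le_rfl]; ring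
      rw [← h, this] at hDtS; linarith
  -- both barriers hit at tS
  have hmaxS : ∀ s, s ∈ Set.Icc (0:ℝ) tS → ε ≤ D s → s = tS := by
    intro s hs hDs
    have hsIcc : s ∈ Set.Icc 0 T := ⟨hs.1, le_trans hs.2 htSS.1.2⟩
    have h1 : s ∈ S := ⟨hsIcc, hDs⟩
    exact le_antisymm hs.2 (csInf_le hSbddB h1)
  have hsol2' : IsSol c F P₂ Q₂ := ⟨c2P, c2Q, m2P, m2Q, z2P, z2Q, i2, f2P, f2Q⟩
  have hyc_top : y tS = c := by
    have hchar := sol_char_P hsol2' htS0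
    have hP2pos : 0 < P₂ tS := by
      have h1 : P₁ tS ≥ 0 := by rw [← z1P 0 le_rfl]; exact m1P htS0
      simp only [hD] at hDtS
      linarith
    have hφc : Continuous (fun s => P₂ s + (F s - P₂ s + Q₂ s) - c) := (c2P.add ((hF.sub c2P).add c2Q)).sub continuous_const
    obtain ⟨sA, hsA, heqA⟩ := runSup_attained hφc htS0 (by rw [← hchar]; exact hP2pos)
    rw [← hchar] at heqA
    have hy2le : F sA - P₂ sA + Q₂ sA ≤ c := (Set.mem_Icc.1 (i2 sA hsA.1)).2
    have hP2m : P₂ sA ≤ P₂ tS := m2P hsA.2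
    have hyeqc : F sA - P₂ sA + Q₂ sA = c := by linarith
    have hP2eq : P₂ sA = P₂ tS := by linarith
    have hDsA : ε ≤ D sA := by
      have : P₁ sA ≤ P₁ tS := m1P hsA.2
      simp only [hD] at hDtS ⊢
      linarith
    have := hmaxS sA hsA hDsA
    rw [this] at hyeqc
    exact hyeqc
  have hyc_bot : y tS = -c := by
    have hchar := sol_char_Q hsol2' htS0
    have hQ2pos : 0 < Q₂ tS := by
      have h1 : Q₁ tS ≥ 0 := by rw [← z1Q 0 le_rfl]; exact m1Q htS0
      have := hQD tS htS0
      linarith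
    have hφc : Continuous (fun s => Q₂ s + (-(F s - P₂ s + Q₂ s)) - c) := (c2Q.add (((hF.sub c2P).add c2Q).neg)).sub continuous_const
    obtain ⟨sA, hsA, heqA⟩ := runSup_attained hφc htS0 (by rw [← hchar]; exact hQ2pos)
    rw [← hchar] at heqA
    have hy2ge : -c ≤ F sA - P₂ sA + Q₂ sA := (Set.mem_Icc.1 (i2 sA hsA.1)).1
    have hQ2m : Q₂ sA ≤ Q₂ tS := m2Q hsA.2
    have hyeqc : F sA - P₂ sA + Q₂ sA = -c := by linarith
    have hQ2eq : Q₂ sA = Q₂ tS := by linarith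
    have hDsA : ε ≤ D sA := by
      have h2 : Q₁ sA ≤ Q₁ tS := m1Q hsA.2
      have h3 := hQD sA hsA.1
      have h4 := hQD tS htS0
      linarith
    have := hmaxS sA hsA hDsA
    rw [this] at hyeqc
    exact hyeqc
  simp only [hy] at hyc_top hyc_bot
  linarith

theorem unique_sol {P₁ Q₁ P₂ Q₂ : ℝ → ℝ} (hc : 0 < c) (hF : Continuous F)
    (sol1 : IsSol c F P₁ Q₁) (sol2 : IsSol c F P₂ Q₂) : P₁ = P₂ ∧ Q₁ = Q₂ := by
  have hyeq : ∀ t, 0 ≤ t → F t - P₁ t + Q₁ t = F t - P₂ t + Q₂ t := fun t ht =>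
    le_antisymm (y_le hF sol1 sol2 hc t ht) (y_le hF sol2 sol1 hc t ht)
  have hyeq' : ∀ t, 0 ≤ t → F t - P₂ t + Q₂ t = F t - P₁ t + Q₁ t := fun t ht =>
    (hyeq t ht).symm
  have hPeq : ∀ t, P₁ t = P₂ t := by
    intro t
    rcases le_or_gt 0 t with ht | ht
    · exact le_antisymm (P_le hF hc sol2 sol1 hyeq' t ht) (P_le hF hc sol1 sol2 hyeq t ht)
    · rw [sol1.2.2.2.2.1 t (le_of_lt ht), sol2.2.2.2.2.1 t (le_of_lt ht)]
  have hQeq : ∀ t, Q₁ t = Q₂ t := by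
    intro t
    rcases le_or_gt 0 t with ht | ht
    · have := hyeq t ht
      have := hPeq t
      linarith
    · rw [sol1.2.2.2.2.2.1 t (le_of_lt ht), sol2.2.2.2.2.2.1 t (le_of_lt ht)]
  exact ⟨funext hPeq, funext hQeq⟩

end Unique

/-- The deterministic two-sided Skorokhod problem on `[−c, c]`: for continuous `f` on
`[0, ∞)` starting in `[−c, c]`, there is a unique pair `(η⁺, η⁻)` of continuous
nondecreasing functions vanishing at `0` such that `y = f − η⁺ + η⁻` stays in `[−c, c]`,
`η⁺` is constant on every interval where `y < c`, and `η⁻` is constant on every interval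
where `y > −c`. -/
theorem two_sided_skorokhod_problem
    (c : ℝ) (hc : 0 < c) (f : {t : ℝ // 0 ≤ t} → ℝ)
    (hf : Continuous f) (hf0 : f ⟨0, le_refl 0⟩ ∈ Set.Icc (-c) c) :
    ∃! η : ({t : ℝ // 0 ≤ t} → ℝ) × ({t : ℝ // 0 ≤ t} → ℝ),
      Continuous η.1 ∧ Continuous η.2 ∧
      Monotone η.1 ∧ Monotone η.2 ∧
      η.1 ⟨0, le_refl 0⟩ = 0 ∧ η.2 ⟨0, le_refl 0⟩ = 0 ∧
      (∀ t, f t - η.1 t + η.2 t ∈ Set.Icc (-c) c) ∧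
      (∀ t₁ t₂, t₁ ≤ t₂ →
        (∀ s, t₁ ≤ s → s ≤ t₂ → f s - η.1 s + η.2 s < c) → η.1 t₁ = η.1 t₂) ∧
      (∀ t₁ t₂, t₁ ≤ t₂ →
        (∀ s, t₁ ≤ s → s ≤ t₂ → -c < f s - η.1 s + η.2 s) → η.2 t₁ = η.2 t₂) := by
  classical
  set emb : ℝ → {t : ℝ // 0 ≤ t} := fun t => ⟨max t 0, le_max_right t 0⟩ with hembdef
  have hembcont : Continuous emb :=
    Continuous.subtype_mk (continuous_id.max continuous_const) _
  have hemb : ∀ (t : ℝ) (ht : 0 ≤ t), emb t = ⟨t, ht⟩ :=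
    fun t ht => Subtype.ext (max_eq_left ht)
  have hembs : ∀ s : {t : ℝ // 0 ≤ t}, emb s.val = s :=
    fun s => Subtype.ext (max_eq_left s.2)
  set F : ℝ → ℝ := fun t => f (emb t) with hFdef
  have hFcont : Continuous F := hf.comp hembcont
  have hFval : ∀ s : {t : ℝ // 0 ≤ t}, F s.val = f s := fun s => by
    show f (emb s.val) = f s
    rw [hembs s]
  have hF0 : F 0 ∈ Set.Icc (-c) c := by
    have h1 : F 0 = f ⟨0, le_refl 0⟩ := by
      show f (emb 0) = _
      rw [hemb 0 le_rfl]
    rw [h1]; exact hf0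
  have hsolPQ : IsSol c F (op c F (skLim c F)) (skLim c F) := exists_sol hc hFcont hF0
  set P := op c F (skLim c F) with hPdef
  set Q := skLim c F with hQdef
  have cP := hsolPQ.1
  have cQ := hsolPQ.2.1
  have mP := hsolPQ.2.2.1
  have mQ := hsolPQ.2.2.2.1
  have zP := hsolPQ.2.2.2.2.1
  have zQ := hsolPQ.2.2.2.2.2.1
  have iy := hsolPQ.2.2.2.2.2.2.1
  have fP := hsolPQ.2.2.2.2.2.2.2.1
  have fQ := hsolPQ.2.2.2.2.2.2.2.2
  refine ⟨(fun t => P t.val, fun t => Q t.val), ⟨?_, ?_, ?_, ?_, ?_, ?_, ?_, ?_, ?_⟩, ?_⟩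
  · exact cP.comp continuous_subtype_val
  · exact cQ.comp continuous_subtype_val
  · exact fun a b hab => mP (Subtype.coe_le_coe.2 hab)
  · exact fun a b hab => mQ (Subtype.coe_le_coe.2 hab)
  · exact zP 0 le_rfl
  · exact zQ 0 le_rfl
  · intro t
    have h1 := iy t.val t.2
    rwa [hFval t] at h1
  · intro t₁ t₂ h12 hy
    refine fP t₁.val t₂.val t₁.2 h12 ?_
    intro s hs1 hs2
    have hs0 : (0:ℝ) ≤ s := le_trans t₁.2 hs1
    have h1 := hy ⟨s, hs0⟩ hs1 hs2
    rwa [← hFval ⟨s, hs0⟩] at h1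
  · intro t₁ t₂ h12 hy
    refine fQ t₁.val t₂.val t₁.2 h12 ?_
    intro s hs1 hs2
    have hs0 : (0:ℝ) ≤ s := le_trans t₁.2 hs1
    have h1 := hy ⟨s, hs0⟩ hs1 hs2
    rwa [← hFval ⟨s, hs0⟩] at h1
  · rintro ⟨η1, η2⟩ ⟨hc1, hc2, hm1, hm2, hz1, hz2, hi, hf1, hf2⟩
    set P' : ℝ → ℝ := fun t => η1 (emb t) with hP'def
    set Q' : ℝ → ℝ := fun t => η2 (emb t) with hQ'def
    have hsol' : IsSol c F P' Q' := by
      refine ⟨hc1.comp hembcont, hc2.comp hembcont, ?_, ?_, ?_, ?_, ?_, ?_, ?_⟩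
      · intro a b hab
        exact hm1 (Subtype.mk_le_mk.2 (max_le_max hab le_rfl))
      · intro a b hab
        exact hm2 (Subtype.mk_le_mk.2 (max_le_max hab le_rfl))
      · intro t ht
        show η1 (emb t) = 0
        have : emb t = ⟨0, le_refl 0⟩ := Subtype.ext (max_eq_right ht)
        rw [this]; exact hz1
      · intro t ht
        show η2 (emb t) = 0
        have : emb t = ⟨0, le_refl 0⟩ := Subtype.ext (max_eq_right ht)
        rw [this]; exact hz2
      · intro t ht
        show F t - η1 (emb t) + η2 (emb t) ∈ Set.Icc (-c) c
        rw [hemb t ht, show F t = f ⟨t, ht⟩ from hFval ⟨t, ht⟩]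
        exact hi ⟨t, ht⟩
      · intro t₁ t₂ ht₁ h12 hy
        show η1 (emb t₁) = η1 (emb t₂)
        rw [hemb t₁ ht₁, hemb t₂ (le_trans ht₁ h12)]
        refine hf1 ⟨t₁, ht₁⟩ ⟨t₂, le_trans ht₁ h12⟩ h12 ?_
        intro s hs1 hs2
        have h1 := hy s.val hs1 hs2
        show f s - η1 s + η2 s < c
        have e1 : P' s.val = η1 s := by show η1 (emb s.val) = η1 s; rw [hembs s]
        have e2 : Q' s.val = η2 s := by show η2 (emb s.val) = η2 s; rw [hembs s]
        rw [← e1, ← e2, ← hFval s]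
        exact h1
      · intro t₁ t₂ ht₁ h12 hy
        show η2 (emb t₁) = η2 (emb t₂)
        rw [hemb t₁ ht₁, hemb t₂ (le_trans ht₁ h12)]
        refine hf2 ⟨t₁, ht₁⟩ ⟨t₂, le_trans ht₁ h12⟩ h12 ?_
        intro s hs1 hs2
        have h1 := hy s.val hs1 hs2
        show -c < f s - η1 s + η2 s
        have e1 : P' s.val = η1 s := by show η1 (emb s.val) = η1 s; rw [hembs s]
        have e2 : Q' s.val = η2 s := by show η2 (emb s.val) = η2 s; rw [hembs s]
        rw [← e1, ← e2, ← hFval s]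
        exact h1
    obtain ⟨hPeq, hQeq⟩ := unique_sol hc hFcont hsolPQ hsol'
    have h1 : η1 = fun t : {t : ℝ // 0 ≤ t} => P t.val := by
      funext t
      have e1 : P' t.val = η1 t := by show η1 (emb t.val) = η1 t; rw [hembs t]
      rw [← e1, ← hPeq]
    have h2 : η2 = fun t : {t : ℝ // 0 ≤ t} => Q t.val := by
      funext t
      have e2 : Q' t.val = η2 t := by show η2 (emb t.val) = η2 t; rw [hembs t]
      rw [← e2, ← hQeq]
    rw [Prod.mk.injEq]
    exact ⟨h1, h2⟩
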